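/- Let X, Y be metric spaces and f : X → Y continuous on X. Suppose there exist p, x ∈ X with d_Y(f(x),f(p)) = β > 0 and a continuous path in X connecting p and x. If for every ε with 0 < ε < β the open balls B(p, δ(p,ε)) and B(x, δ(x,ε)) are path-connected, where δ(q,ε) := dist(q, f⁻¹(S[f(q),ε])), then for every such ε, δ(p,ε) and δ(x,ε) are delta-epsilon numbers for f at p and at x respectively: for all z ∈ X, d_X(z,p) < δ(p,ε) implies d_Y(f(z),f(p)) < ε, and d_X(z,x) < δ(x,ε) implies d_Y(f(z),f(x)) < ε. -/

import Mathlib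

private lemma delta_eps_aux {X Y : Type*} [MetricSpace X] [MetricSpace Y]
    (f : X → Y) (hf : Continuous f) (q : X) (ε : ℝ) (hε : 0 < ε)
    (hc : IsPathConnected (Metric.ball q (Metric.infDist q (f ⁻¹' Metric.sphere (f q) ε)))) :
    ∀ z : X, dist z q < Metric.infDist q (f ⁻¹' Metric.sphere (f q) ε) →
      dist (f z) (f q) < ε := by
  intro z hz
  set δ := Metric.infDist q (f ⁻¹' Metric.sphere (f q) ε) with hδdef
  have hδ : 0 < δ := lt_of_le_of_lt dist_nonneg hz
  by_contra h
  push_neg at h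
  obtain ⟨γ, hγ⟩ := hc.joinedIn q (Metric.mem_ball_self hδ) z (Metric.mem_ball.mpr hz)
  have hcont : Continuous fun t : ℝ => dist (f (γ.extend t)) (f q) :=
    (hf.comp γ.continuous_extend).dist continuous_const
  have h0 : dist (f (γ.extend 0)) (f q) = 0 := by simp
  have h1 : ε ≤ dist (f (γ.extend 1)) (f q) := by simpa using h
  obtain ⟨t, ht, hteq⟩ := intermediate_value_Icc (zero_le_one) hcont.continuousOn
    (Set.mem_Icc.mpr ⟨by simpa using hε.le, by simpa using h⟩)
  have hmem : γ.extend t ∈ f ⁻¹' Metric.sphere (f q) ε := hteq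
  have hball : γ.extend t ∈ Metric.ball q δ := by
    rw [Path.extend_apply γ ht]
    exact hγ ⟨t, ht⟩
  have hle : δ ≤ dist q (γ.extend t) := by
    rw [hδdef]; exact Metric.infDist_le_dist_of_mem hmem
  rw [Metric.mem_ball, dist_comm] at hball
  linarith

theorem delta_epsilon_numbers_of_joined {X Y : Type*} [MetricSpace X] [MetricSpace Y]
    (f : X → Y) (hf : Continuous f) (p x : X) (β : ℝ)
    (hβ : dist (f x) (f p) = β) (hβpos : 0 < β) (hpath : Joined p x)
    (hball : ∀ ε : ℝ, 0 < ε → ε < β →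
      IsPathConnected (Metric.ball p (Metric.infDist p (f ⁻¹' Metric.sphere (f p) ε))) ∧
      IsPathConnected (Metric.ball x (Metric.infDist x (f ⁻¹' Metric.sphere (f x) ε)))) :
    ∀ ε : ℝ, 0 < ε → ε < β →
      (∀ z : X, dist z p < Metric.infDist p (f ⁻¹' Metric.sphere (f p) ε) →
        dist (f z) (f p) < ε) ∧
      (∀ z : X, dist z x < Metric.infDist x (f ⁻¹' Metric.sphere (f x) ε) →
        dist (f z) (f x) < ε) := by
  intro ε hε hεβ
  obtain ⟨hp, hx⟩ := hball ε hε hεβ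
  exact ⟨delta_eps_aux f hf p ε hε hp, delta_eps_aux f hf x ε hε hx⟩
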